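/- Let θ ∈ (0,1), and let Ω ⊆ [n−1] be a random subset including each index independently with probability θ. For w ∈ ℝ^{n−1} with ‖w‖ < 1 and a fixed unit vector v = w/‖w‖, define h(t) = (1−θ)·t·E_Ω‖v_Ω‖ + θ·E_Ω√(1 − t²‖v_{Ω^c}‖²) for t ∈ (0,1). Then h''(t) ≤ −θ(1−θ) for all t ∈ (0,1). -/

import Mathlib

open Finset

private theorem sqrtDerivAux (c s : ℝ) (hu : 0 < 1 - s^2 * c) :
    HasDerivAt (fun x : ℝ => Real.sqrt (1 - x^2 * c)) (-(s * c) / Real.sqrt (1 - s^2 * c)) s := by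
  have h1 : HasDerivAt (fun x : ℝ => 1 - x^2 * c) (-(2*s*c)) s := by
    have := ((hasDerivAt_pow 2 s).mul_const c).const_sub 1
    refine this.congr_deriv ?_; ring
  have h2 := (Real.hasDerivAt_sqrt (ne_of_gt hu)).comp s h1
  refine h2.congr_deriv ?_
  have : Real.sqrt (1 - s^2*c) ≠ 0 := by positivity
  field_simp

private theorem secondDerivAux (c t : ℝ) (hc0 : 0 ≤ c) (hc1 : c ≤ 1) (ht0 : 0 < t) (ht1 : t < 1) :
    ∃ D, HasDerivAt (fun s : ℝ => -(s * c) / Real.sqrt (1 - s^2 * c)) D t ∧ D ≤ -c := by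
  have hu : 0 < 1 - t^2 * c := by nlinarith
  have hsu : 0 < Real.sqrt (1 - t^2 * c) := Real.sqrt_pos.mpr hu
  have hnum : HasDerivAt (fun s : ℝ => -(s * c)) (-c) t := by
    have := ((hasDerivAt_id t).mul_const c).neg
    refine this.congr_deriv ?_; ring
  have hD := hnum.div (sqrtDerivAux c t hu) (ne_of_gt hsu)
  refine ⟨_, hD, ?_⟩
  have hsq : Real.sqrt (1 - t^2*c) ^ 2 = 1 - t^2*c := Real.sq_sqrt hu.le
  have key : (-c * Real.sqrt (1 - t^2*c) - -(t*c) * (-(t*c) / Real.sqrt (1 - t^2*c))) / (Real.sqrt (1 - t^2*c))^2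
      = -(c / ((1 - t^2*c) * Real.sqrt (1 - t^2*c))) := by
    rw [hsq]
    field_simp
    have hsq' : Real.sqrt (1 - c*t^2) ^ 2 = 1 - c*t^2 := by rw [mul_comm]; exact hsq
    rw [hsq']
    ring
  rw [key, neg_le_neg_iff, le_div_iff₀ (by positivity)]
  have hs1 : Real.sqrt (1 - t^2*c) ≤ 1 := Real.sqrt_le_one.mpr (by nlinarith)
  have husu : (1 - t^2*c) * Real.sqrt (1 - t^2*c) ≤ 1 := by nlinarith [hsu.le]
  calc c * ((1 - t^2*c) * Real.sqrt (1 - t^2*c)) ≤ c * 1 :=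
        mul_le_mul_of_nonneg_left husu hc0
    _ = c := mul_one c

private theorem binomAux (θ : ℝ) {ι : Type*} [DecidableEq ι] (T : Finset ι) :
    ∑ Ω ∈ T.powerset, θ ^ Ω.card * (1-θ) ^ (T.card - Ω.card) = 1 := by
  have hp := Finset.prod_add (fun _ : ι => θ) (fun _ : ι => 1-θ) T
  simp only [Finset.prod_const] at hp
  calc ∑ Ω ∈ T.powerset, θ ^ Ω.card * (1-θ) ^ (T.card - Ω.card)
      = ∑ Ω ∈ T.powerset, θ ^ Ω.card * (1-θ) ^ ((T \ Ω).card) := by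
        apply Finset.sum_congr rfl
        intro Ω hΩ
        rw [Finset.card_sdiff_of_subset (Finset.mem_powerset.mp hΩ)]
    _ = (θ + (1 - θ)) ^ T.card := hp.symm
    _ = 1 := by norm_num

/-- Negative curvature of the population objective along radial directions:
    with Ω ⊆ [m] a random support (each index included independently with
    probability θ), v = w/‖w‖ for 0 ≠ w with ‖w‖ < 1, and
    h(t) = (1−θ)·t·E_Ω‖v_Ω‖ + θ·E_Ω√(1 − t²‖v_{Ω^c}‖²),
    one has h''(t) ≤ −θ(1−θ) for all t ∈ (0,1). -/
theorem stmt11 (m : ℕ) (θ : ℝ) (hθ : θ ∈ Set.Ioo (0 : ℝ) 1)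
    (w : Fin m → ℝ) (hw : w ≠ 0) (hw1 : Real.sqrt (∑ i, w i ^ 2) < 1)
    (v : Fin m → ℝ) (hv : v = fun i => w i / Real.sqrt (∑ j, w j ^ 2))
    (h : ℝ → ℝ)
    (hh : h = fun t =>
      (1 - θ) * t *
          (∑ Ω ∈ (Finset.univ : Finset (Fin m)).powerset,
            θ ^ Ω.card * (1 - θ) ^ (m - Ω.card) * Real.sqrt (∑ i ∈ Ω, v i ^ 2)) +
      θ * ∑ Ω ∈ (Finset.univ : Finset (Fin m)).powerset,
            θ ^ Ω.card * (1 - θ) ^ (m - Ω.card) *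
              Real.sqrt (1 - t ^ 2 * ∑ i ∈ Finset.univ \ Ω, v i ^ 2))
    (t : ℝ) (ht : t ∈ Set.Ioo (0 : ℝ) 1) :
    deriv (deriv h) t ≤ -(θ * (1 - θ)) := by
  obtain ⟨hθ0, hθ1⟩ := hθ
  obtain ⟨ht0, ht1⟩ := ht
  -- basic facts about v
  have hSpos : 0 < ∑ j, w j ^ 2 := by
    have hex : ∃ i, w i ≠ 0 := by
      by_contra hcon; push_neg at hcon; exact hw (funext hcon)
    obtain ⟨i, hi⟩ := hex
    exact Finset.sum_pos' (fun j _ => sq_nonneg _) ⟨i, Finset.mem_univ i, by positivity⟩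
  have hvsum : ∑ i, v i ^ 2 = 1 := by
    have : ∀ i, v i ^ 2 = w i ^ 2 / (∑ j, w j ^ 2) := by
      intro i
      rw [hv]
      rw [div_pow, Real.sq_sqrt hSpos.le]
    rw [Finset.sum_congr rfl (fun i _ => this i), ← Finset.sum_div]
    field_simp
  -- abbreviations
  set p : Finset (Fin m) → ℝ := fun Ω => θ ^ Ω.card * (1 - θ) ^ (m - Ω.card) with hp
  set c : Finset (Fin m) → ℝ := fun Ω => ∑ i ∈ Finset.univ \ Ω, v i ^ 2 with hcdef
  have hp0 : ∀ Ω, 0 ≤ p Ω := fun Ω => by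
    have h1 : (0:ℝ) ≤ θ := hθ0.le
    have h2 : (0:ℝ) ≤ 1 - θ := by linarith
    positivity
  have hc0 : ∀ Ω, 0 ≤ c Ω := fun Ω => Finset.sum_nonneg fun i _ => sq_nonneg _
  have hc1 : ∀ Ω, c Ω ≤ 1 := by
    intro Ω
    rw [← hvsum]
    exact Finset.sum_le_sum_of_subset_of_nonneg (Finset.sdiff_subset) (fun i _ _ => sq_nonneg _)
  set A : ℝ := ∑ Ω ∈ (Finset.univ : Finset (Fin m)).powerset,
      p Ω * Real.sqrt (∑ i ∈ Ω, v i ^ 2) with hA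
  set h1 : ℝ → ℝ := fun s => (1 - θ) * A +
      θ * ∑ Ω ∈ (Finset.univ : Finset (Fin m)).powerset,
        p Ω * (-(s * c Ω) / Real.sqrt (1 - s ^ 2 * c Ω)) with hh1
  -- first derivative
  have Hd : ∀ s ∈ Set.Ioo (0:ℝ) 1, HasDerivAt h (h1 s) s := by
    intro s hs
    obtain ⟨hs0, hs1⟩ := hs
    rw [hh]
    apply HasDerivAt.add
    · have := ((hasDerivAt_id s).const_mul (1-θ)).mul_const A
      refine this.congr_deriv ?_
      ring
    · apply HasDerivAt.const_mul
      apply HasDerivAt.fun_sum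
      intro Ω _
      have hu : 0 < 1 - s^2 * c Ω := by nlinarith [hc0 Ω, hc1 Ω]
      exact (sqrtDerivAux (c Ω) s hu).const_mul (p Ω)
  have hEq : deriv h =ᶠ[nhds t] h1 := by
    filter_upwards [Ioo_mem_nhds ht0 ht1] with s hs
    exact (Hd s hs).deriv
  rw [hEq.deriv_eq]
  -- second derivative
  have Hd2 : ∀ Ω : Finset (Fin m), ∃ D,
      HasDerivAt (fun s : ℝ => -(s * c Ω) / Real.sqrt (1 - s^2 * c Ω)) D t ∧ D ≤ -(c Ω) :=
    fun Ω => secondDerivAux (c Ω) t (hc0 Ω) (hc1 Ω) ht0 ht1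
  choose D hD hDle using Hd2
  have Hh1 : HasDerivAt h1 (θ * ∑ Ω ∈ (Finset.univ : Finset (Fin m)).powerset, p Ω * D Ω) t := by
    rw [hh1]
    apply HasDerivAt.const_add
    apply HasDerivAt.const_mul
    apply HasDerivAt.fun_sum
    intro Ω _
    exact (hD Ω).const_mul (p Ω)
  rw [Hh1.deriv]
  -- the expectation identity
  have hkey : ∑ Ω ∈ (Finset.univ : Finset (Fin m)).powerset, p Ω * c Ω = 1 - θ := by
    have hrw : ∀ Ω : Finset (Fin m), p Ω * c Ω
        = ∑ i : Fin m, (if i ∉ Ω then p Ω * v i ^ 2 else 0) := by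
      intro Ω
      rw [hcdef]
      simp only
      rw [Finset.mul_sum, Finset.sdiff_eq_filter, Finset.sum_filter]
    rw [Finset.sum_congr rfl (fun Ω _ => hrw Ω), Finset.sum_comm]
    have hinner : ∀ i : Fin m,
        (∑ Ω ∈ (Finset.univ : Finset (Fin m)).powerset, if i ∉ Ω then p Ω * v i ^ 2 else 0)
          = (1 - θ) * v i ^ 2 := by
      intro i
      rw [← Finset.sum_filter]
      have hfe : ((Finset.univ : Finset (Fin m)).powerset.filter (fun Ω => i ∉ Ω))
          = ((Finset.univ : Finset (Fin m)).erase i).powerset := by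
        ext Ω
        simp [Finset.mem_powerset, Finset.subset_erase]
      rw [hfe]
      have hcard : ((Finset.univ : Finset (Fin m)).erase i).card = m - 1 := by
        rw [Finset.card_erase_of_mem (Finset.mem_univ i), Finset.card_univ, Fintype.card_fin]
      have hm1 : 1 ≤ m := by
        have := i.isLt; omega
      have hsum : ∑ Ω ∈ ((Finset.univ : Finset (Fin m)).erase i).powerset, p Ω * v i ^ 2
          = (1 - θ) * v i ^ 2 := by
        have hpΩ : ∀ Ω ∈ ((Finset.univ : Finset (Fin m)).erase i).powerset,
            p Ω * v i ^ 2 = ((1-θ) * v i ^ 2) * (θ ^ Ω.card * (1-θ) ^ ((m-1) - Ω.card)) := by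
          intro Ω hΩ
          have hΩc : Ω.card ≤ m - 1 := by
            have := Finset.card_le_card (Finset.mem_powerset.mp hΩ)
            rw [hcard] at this; exact this
          have : m - Ω.card = ((m-1) - Ω.card) + 1 := by omega
          rw [hp]
          simp only
          rw [this, pow_succ]
          ring
        rw [Finset.sum_congr rfl hpΩ, ← Finset.mul_sum]
        have := binomAux θ ((Finset.univ : Finset (Fin m)).erase i)
        rw [hcard] at this
        rw [this, mul_one]
      exact hsum
    rw [Finset.sum_congr rfl (fun i _ => hinner i), ← Finset.mul_sum, hvsum, mul_one]
  -- final bound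
  have hsumle : ∑ Ω ∈ (Finset.univ : Finset (Fin m)).powerset, p Ω * D Ω
      ≤ ∑ Ω ∈ (Finset.univ : Finset (Fin m)).powerset, p Ω * (-(c Ω)) := by
    apply Finset.sum_le_sum
    intro Ω _
    exact mul_le_mul_of_nonneg_left (hDle Ω) (hp0 Ω)
  have : ∑ Ω ∈ (Finset.univ : Finset (Fin m)).powerset, p Ω * (-(c Ω)) = -(1 - θ) := by
    simp only [mul_neg, Finset.sum_neg_distrib]
    rw [hkey]
  rw [this] at hsumle
  calc θ * ∑ Ω ∈ (Finset.univ : Finset (Fin m)).powerset, p Ω * D Ω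
      ≤ θ * (-(1-θ)) := by
        exact mul_le_mul_of_nonneg_left hsumle hθ0.le
    _ = -(θ * (1-θ)) := by ring
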